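/- Let A be a (1̄,t)-locating array with N rows, k columns, alphabet sizes 2≤v₁≤⋯≤v_k, and suppose v_i=v_{i+1}=⋯=v_{k−t}=v_{k−t+1} for some i∈{1,…,k−t}. Then N ≥ ⌈ 2·(∑_{i≤j₁<⋯<j_t≤k} ∏_{s=1}^{t} v_{j_s}) / (1 + C(k−i+1,t)) ⌉. -/

import Mathlib

open Finset

/-- The set of rows of array `A` containing the interaction `(I, σ)`. -/
def rowsOf {R ι : Type*} [Fintype R] [DecidableEq ι] (A : R → ι → ℕ)
    (I : Finset ι) (σ : ι → ℕ) : Finset R :=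
  Finset.univ.filter fun r => ∀ i ∈ I, A r i = σ i

/-- `(I, σ)` is a `t`-way interaction for alphabet sizes `v`. -/
def isInter {ι : Type*} (v : ι → ℕ) (t : ℕ) (I : Finset ι) (σ : ι → ℕ) : Prop :=
  I.card = t ∧ ∀ i ∈ I, σ i < v i

/-- Mixed covering array of strength `t`: every `t`-way interaction appears in some row. -/
def isMCA {R ι : Type*} [Fintype R] [DecidableEq ι] (A : R → ι → ℕ) (v : ι → ℕ) (t : ℕ) : Prop :=
  ∀ I σ, isInter v t I σ → (rowsOf A I σ).Nonempty

/-- `(1,t)`-locating: distinct `t`-way interactions have distinct row supports. -/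
def isLocating {R ι : Type*} [Fintype R] [DecidableEq ι] (A : R → ι → ℕ) (v : ι → ℕ) (t : ℕ) : Prop :=
  ∀ I₁ σ₁ I₂ σ₂, isInter v t I₁ σ₁ → isInter v t I₂ σ₂ →
    rowsOf A I₁ σ₁ = rowsOf A I₂ σ₂ → I₁ = I₂ ∧ ∀ i ∈ I₁, σ₁ i = σ₂ i

/-- `(1̄,t)`-locating array: an MCA which is `(1,t)`-locating. -/
def isLA {R ι : Type*} [Fintype R] [DecidableEq ι] (A : R → ι → ℕ) (v : ι → ℕ) (t : ℕ) : Prop :=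
  isMCA A v t ∧ isLocating A v t

/-- The last `t` columns (0-based indices `≥ k - t`). -/
def lastCols (k t : ℕ) : Finset (Fin k) :=
  Finset.univ.filter fun i => k - t ≤ (i : ℕ)

/-- Lower bound when `v` is constant on 1-based positions `i₀, …, k-t+1` with `1 ≤ i₀ ≤ k-t`:
`N` is at least the ceiling of `2 Σ ∏ / (1 + (k-i₀+1).choose t)`, where the sum is over
`t`-subsets of the columns with 1-based index at least `i₀`. -/
theorem stmt_2 {N k t : ℕ} (ht : t < k) (i₀ : ℕ) (hi1 : 1 ≤ i₀) (hi2 : i₀ ≤ k - t)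
    (v : Fin k → ℕ) (h2 : ∀ i, 2 ≤ v i) (hmono : Monotone v)
    (hconst : ∀ p q : Fin k, i₀ - 1 ≤ (p : ℕ) → (p : ℕ) ≤ k - t →
      i₀ - 1 ≤ (q : ℕ) → (q : ℕ) ≤ k - t → v p = v q)
    (A : Fin N → Fin k → ℕ) (hA : ∀ r j, A r j < v j) (hLA : isLA A v t) :
    (2 * ∑ J ∈ (Finset.univ.filter fun i : Fin k => i₀ - 1 ≤ (i : ℕ)).powersetCard t,
        ∏ j ∈ J, v j + (k - i₀ + 1).choose t) / (1 + (k - i₀ + 1).choose t) ≤ N := by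
  classical
  obtain ⟨hMCA, hLoc⟩ := hLA
  set S : Finset (Fin k) := Finset.univ.filter (fun i : Fin k => i₀ - 1 ≤ (i : ℕ)) with hSdef
  set Js : Finset (Finset (Fin k)) := S.powersetCard t with hJsdef
  set P : Finset (Fin k) → Finset (Fin k → ℕ) :=
    fun J => Fintype.piFinset fun j => Finset.range (if j ∈ J then v j else 1) with hPdef
  have hmemP : ∀ (J : Finset (Fin k)) (σ : Fin k → ℕ),
      σ ∈ P J ↔ ∀ j, σ j < (if j ∈ J then v j else 1) := by
    intro J σ
    simp [hPdef, Fintype.mem_piFinset]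
  have hcardP : ∀ J : Finset (Fin k), (P J).card = ∏ j ∈ J, v j := by
    intro J
    rw [hPdef]
    rw [Fintype.card_piFinset]
    simp only [Finset.card_range]
    rw [Finset.prod_ite_mem Finset.univ J v, Finset.univ_inter]
  set Ints : Finset ((_ : Finset (Fin k)) × (Fin k → ℕ)) := Js.sigma (fun J => P J) with hIntsdef
  have hmemInts : ∀ p : (_ : Finset (Fin k)) × (Fin k → ℕ),
      p ∈ Ints ↔ p.1 ∈ Js ∧ p.2 ∈ P p.1 := by
    intro p; rw [hIntsdef, Finset.mem_sigma]
  have hisInter : ∀ p ∈ Ints, isInter v t p.1 p.2 := by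
    intro p hp
    obtain ⟨h1, h2'⟩ := (hmemInts p).mp hp
    refine ⟨(Finset.mem_powersetCard.mp h1).2, fun i hi => ?_⟩
    have := (hmemP p.1 p.2).mp h2' i
    simpa [hi] using this
  -- unique σ per row
  have huniq : ∀ (J : Finset (Fin k)) (r : Fin N),
      (P J).filter (fun σ => ∀ i ∈ J, A r i = σ i)
        = {fun j => if j ∈ J then A r j else 0} := by
    intro J r
    ext σ
    rw [Finset.mem_filter, Finset.mem_singleton, hmemP]
    constructor
    · rintro ⟨h1, hmatch⟩
      funext j
      by_cases hj : j ∈ J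
      · simp [hj, (hmatch j hj).symm]
      · have := h1 j; simp only [hj, if_false, Nat.lt_one_iff] at this
        simp [hj, this]
    · rintro rfl
      refine ⟨fun j => ?_, fun i hi => by simp [hi]⟩
      by_cases hj : j ∈ J <;> simp [hj, hA]
  have hNsum : ∀ J : Finset (Fin k), ∑ σ ∈ P J, (rowsOf A J σ).card = N := by
    intro J
    have step : ∀ σ : Fin k → ℕ,
        (rowsOf A J σ).card = ∑ r : Fin N, if (∀ i ∈ J, A r i = σ i) then 1 else 0 := by
      intro σ
      rw [rowsOf, Finset.card_filter]
      congr!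
    calc ∑ σ ∈ P J, (rowsOf A J σ).card
        = ∑ σ ∈ P J, ∑ r : Fin N, if (∀ i ∈ J, A r i = σ i) then 1 else 0 :=
          Finset.sum_congr rfl fun σ _ => step σ
      _ = ∑ r : Fin N, ∑ σ ∈ P J, if (∀ i ∈ J, A r i = σ i) then 1 else 0 :=
          Finset.sum_comm
      _ = ∑ r : Fin N, 1 := by
          refine Finset.sum_congr rfl fun r _ => ?_
          calc (∑ σ ∈ P J, if (∀ i ∈ J, A r i = σ i) then 1 else 0)
              = ((P J).filter fun σ => ∀ i ∈ J, A r i = σ i).card :=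
                (Finset.card_filter (fun σ => ∀ i ∈ J, A r i = σ i) (P J)).symm
            _ = 1 := by rw [huniq J r]; simp
      _ = N := by simp
  have hCN : ∑ p ∈ Ints, (rowsOf A p.1 p.2).card = Js.card * N := by
    rw [hIntsdef, Finset.sum_sigma]
    rw [Finset.sum_congr rfl (fun J _ => hNsum J), Finset.sum_const, smul_eq_mul]
  have hT : Ints.card = ∑ J ∈ Js, ∏ j ∈ J, v j := by
    rw [hIntsdef, Finset.card_sigma]
    exact Finset.sum_congr rfl fun J _ => hcardP J
  set U := Ints.filter (fun p => (rowsOf A p.1 p.2).card = 1) with hUdef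
  have hdisj : ∀ p₁ ∈ U, ∀ p₂ ∈ U, p₁ ≠ p₂ →
      Disjoint (rowsOf A p₁.1 p₁.2) (rowsOf A p₂.1 p₂.2) := by
    intro p₁ hp₁ p₂ hp₂ hne
    rw [Finset.disjoint_left]
    intro r hr1 hr2
    apply hne
    obtain ⟨hp₁I, h₁c⟩ := Finset.mem_filter.mp hp₁
    obtain ⟨hp₂I, h₂c⟩ := Finset.mem_filter.mp hp₂
    obtain ⟨a, ha⟩ := Finset.card_eq_one.mp h₁c
    obtain ⟨b, hb⟩ := Finset.card_eq_one.mp h₂c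
    have hra : r = a := by rw [ha] at hr1; exact Finset.mem_singleton.mp hr1
    have hrb : r = b := by rw [hb] at hr2; exact Finset.mem_singleton.mp hr2
    have heq : rowsOf A p₁.1 p₁.2 = rowsOf A p₂.1 p₂.2 := by
      rw [ha, hb, ← hra, ← hrb]
    obtain ⟨hI, hσ⟩ := hLoc p₁.1 p₁.2 p₂.1 p₂.2 (hisInter p₁ hp₁I) (hisInter p₂ hp₂I) heq
    have hσfull : p₁.2 = p₂.2 := by
      funext j
      by_cases hj : j ∈ p₁.1
      · exact hσ j hj
      · have h1 := (hmemP p₁.1 p₁.2).mp ((hmemInts p₁).mp hp₁I).2 j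
        have h2' := (hmemP p₂.1 p₂.2).mp ((hmemInts p₂).mp hp₂I).2 j
        rw [← hI] at h2'
        simp only [hj, if_false, Nat.lt_one_iff] at h1 h2'
        rw [h1, h2']
    exact Sigma.ext hI (heq_of_eq hσfull)
  have hUle : U.card ≤ N := by
    have h1 : ∑ p ∈ U, (rowsOf A p.1 p.2).card = U.card := by
      rw [Finset.sum_congr rfl (fun p hp => (Finset.mem_filter.mp hp).2)]
      simp
      rfl
    calc U.card = (U.biUnion fun p => rowsOf A p.1 p.2).card := by
          rw [Finset.card_biUnion hdisj, h1]
      _ ≤ (Finset.univ : Finset (Fin N)).card := Finset.card_le_univ _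
      _ = N := by simp
  have hsumU : ∑ p ∈ Ints, (if (rowsOf A p.1 p.2).card = 1 then 1 else 0) = U.card := by
    rw [hUdef, Finset.sum_boole (fun p => (rowsOf A p.1 p.2).card = 1) Ints, Nat.cast_id]
  have hmain : 2 * Ints.card ≤ Js.card * N + U.card := by
    have hbig : 2 * Ints.card ≤
        ∑ p ∈ Ints, ((rowsOf A p.1 p.2).card + if (rowsOf A p.1 p.2).card = 1 then 1 else 0) := by
      calc 2 * Ints.card = ∑ _p ∈ Ints, 2 := by rw [Finset.sum_const, smul_eq_mul, mul_comm]
        _ ≤ _ := by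
          refine Finset.sum_le_sum fun p hp => ?_
          have h1 : 1 ≤ (rowsOf A p.1 p.2).card :=
            Finset.Nonempty.card_pos (hMCA _ _ (hisInter p hp))
          by_cases hc : (rowsOf A p.1 p.2).card = 1
          · simp [hc]
          · have : 2 ≤ (rowsOf A p.1 p.2).card := by omega
            simp [hc]; omega
    rw [Finset.sum_add_distrib, hCN, hsumU] at hbig
    exact hbig
  -- cardinalities
  have hi0k : i₀ - 1 < k := by omega
  have hScard : S.card = k - i₀ + 1 := by
    have : S = Finset.Ici (⟨i₀ - 1, hi0k⟩ : Fin k) := by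
      ext i
      simp [hSdef, Finset.mem_Ici, Fin.le_def]
    rw [this, Fin.card_Ici]
    have hv : ((⟨i₀ - 1, hi0k⟩ : Fin k) : ℕ) = i₀ - 1 := rfl
    rw [hv]
    omega
  have hC : Js.card = (k - i₀ + 1).choose t := by
    rw [hJsdef, Finset.card_powersetCard, hScard]
  have hkey : 2 * ∑ J ∈ Js, ∏ j ∈ J, v j ≤ (1 + (k - i₀ + 1).choose t) * N := by
    rw [← hT, ← hC]
    calc 2 * Ints.card ≤ Js.card * N + U.card := hmain
      _ ≤ Js.card * N + N := by omega
      _ = (1 + Js.card) * N := by ring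
  rw [Nat.div_le_iff_le_mul_add_pred (by omega : 0 < 1 + (k - i₀ + 1).choose t),
    Nat.add_sub_cancel_left]
  exact Nat.add_le_add_right hkey _
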